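/- arXiv:2111.05030 — 4 statements merged into one kernel-verified Lean document; each statement's English description precedes it below -/
import Mathlib

section
/- For every integer r ≥ 1 and every d ∈ ℤ, the natural density μ^(r)(d) := lim_{N→∞} (1/N)·|{n < N : Δ^(r)(n) = d}| exists and equals ℙ({x ∈ X : Δ^(r)(x) = d}); moreover Σ_{d∈ℤ} μ^(r)(d) = 1. -/
open Filter Topology MeasureTheory

noncomputable section

/-- Sum of the base-`b` digits of `n`. -/
def digitSum (b n : ℕ) : ℕ := (Nat.digits b n).sum

/-- `Δ^(r)(n) = s(n+r) - s(n)`, the variation of the base-`b` digit sum when adding `r`. -/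
def delta (b r n : ℕ) : ℤ := (digitSum b (n + r) : ℤ) - (digitSum b n : ℤ)

/-- The value `x_0 + x_1 b + ⋯ + x_k b^k` given by the first `k+1` digits of a `b`-adic
integer `x : ℕ → Fin b`. -/
def valk (b : ℕ) (x : ℕ → Fin b) (k : ℕ) : ℕ :=
  ∑ i ∈ Finset.range (k + 1), (x i : ℕ) * b ^ i

/-- `Δ_k^(r)(x) = s_k(x+r) - s_k(x)`: since carries propagate upwards, the first `k+1`
digits of `x + r` are the base-`b` digits of `(x_0 + x_1 b + ⋯ + x_k b^k + r) % b^(k+1)`. -/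
def deltak (b r k : ℕ) (x : ℕ → Fin b) : ℤ :=
  (digitSum b ((valk b x k + r) % b ^ (k + 1)) : ℤ) - (digitSum b (valk b x k) : ℤ)

/-- `Δ^(r)(x) = lim_k Δ_k^(r)(x)`; the sequence is eventually constant for `ℙ`-a.e. `x`. -/
def deltaX (b r : ℕ) (x : ℕ → Fin b) : ℤ :=
  limUnder atTop fun k => deltak b r k x

lemma digits_len_le_of_lt_pow {b : ℕ} (hb : 2 ≤ b) {m K : ℕ} (hm : m < b ^ K) :
    (Nat.digits b m).length ≤ K := by
  rcases Nat.eq_zero_or_pos m with rfl | hm0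
  · simp
  by_contra h
  push_neg at h
  have h1 : b ^ (Nat.digits b m).length ≤ b * m :=
    Nat.base_pow_length_digits_le b m hb (by omega)
  have h2 : b ^ (K + 1) ≤ b ^ (Nat.digits b m).length := Nat.pow_le_pow_right (by omega) h
  have : b ^ (K + 1) ≤ b * m := le_trans h2 h1
  rw [pow_succ, mul_comm] at this
  have := Nat.le_of_mul_le_mul_left this (by omega)
  omega

/-- digit-sum additivity across a block boundary -/
lemma digitSum_add_pow_mul {b : ℕ} (hb : 2 ≤ b) {m K : ℕ} (hm : m < b ^ K) (q : ℕ) :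
    digitSum b (m + b ^ K * q) = digitSum b m + digitSum b q := by
  rcases Nat.eq_zero_or_pos q with rfl | hq
  · simp [digitSum]
  have hl : (Nat.digits b m).length ≤ K := digits_len_le_of_lt_pow hb hm
  have h := Nat.digits_append_zeroes_append_digits (b := b) (k := K - (Nat.digits b m).length)
    (m := q) (n := m) hb hq
  rw [Nat.add_sub_cancel' hl] at h
  have := congrArg List.sum h
  simpa [digitSum, List.sum_append] using this.symm

lemma delta_add_pow_mul {b : ℕ} (hb : 2 ≤ b) {m K r : ℕ} (hm : m + r < b ^ K) (q : ℕ) :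
    delta b r (m + b ^ K * q) = delta b r m := by
  unfold delta
  rw [add_right_comm, digitSum_add_pow_mul hb hm q,
    digitSum_add_pow_mul hb (lt_of_le_of_lt (Nat.le_add_right m r) hm) q]
  push_cast; ring

lemma valk_succ (b : ℕ) (x : ℕ → Fin b) (k : ℕ) :
    valk b x (k + 1) = valk b x k + (x (k + 1) : ℕ) * b ^ (k + 1) := by
  unfold valk
  rw [Finset.sum_range_succ]

lemma valk_lt {b : ℕ} (hb : 2 ≤ b) (x : ℕ → Fin b) (k : ℕ) :
    valk b x k < b ^ (k + 1) := by
  induction k with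
  | zero =>
    have h0 : valk b x 0 = (x 0 : ℕ) := by simp [valk]
    rw [h0, pow_one]
    exact (x 0).isLt
  | succ k ih =>
    rw [valk_succ]
    have h0 := ih
    have h1 : (x (k + 1) : ℕ) ≤ b - 1 := by have := (x (k + 1)).isLt; omega
    have h2 : (x (k + 1) : ℕ) * b ^ (k + 1) ≤ (b - 1) * b ^ (k + 1) :=
      Nat.mul_le_mul_right _ h1
    have h3 : b ^ (k + 1 + 1) = b * b ^ (k + 1) := by ring
    have hpos : 0 < b ^ (k + 1) := Nat.pow_pos (by omega)
    have : (b - 1) * b ^ (k + 1) + b ^ (k + 1) = b * b ^ (k + 1) := by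
      have : b - 1 + 1 = b := by omega
      rw [← Nat.succ_mul]; rw [Nat.succ_eq_add_one, this]
    omega

lemma valk_inj {b : ℕ} (hb : 2 ≤ b) :
    ∀ (k : ℕ) (x y : ℕ → Fin b), valk b x k = valk b y k → ∀ i ≤ k, x i = y i := by
  intro k
  induction k with
  | zero =>
    intro x y h i hi
    interval_cases i
    have hx0 : valk b x 0 = (x 0 : ℕ) := by simp [valk]
    have hy0 : valk b y 0 = (y 0 : ℕ) := by simp [valk]
    exact Fin.ext (by rw [← hx0, ← hy0]; exact h)
  | succ k ih =>
    intro x y h i hi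
    rw [valk_succ, valk_succ] at h
    have hx := valk_lt hb x k
    have hy := valk_lt hb y k
    have hdiv : ∀ z : ℕ → Fin b, (valk b z k + (z (k + 1) : ℕ) * b ^ (k + 1)) / b ^ (k + 1)
        = (z (k + 1) : ℕ) := by
      intro z
      rw [Nat.add_mul_div_right _ _ (Nat.pow_pos (by omega)),
        Nat.div_eq_of_lt (valk_lt hb z k), Nat.zero_add]
    have htop : (x (k + 1) : ℕ) = (y (k + 1) : ℕ) := by
      rw [← hdiv x, ← hdiv y, h]
    have hlow : valk b x k = valk b y k := by
      rw [htop] at h; omega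
    rcases Nat.lt_or_ge i (k + 1) with hik | hik
    · exact ih x y hlow i (by omega)
    · have : i = k + 1 := by omega
      subst this
      exact Fin.ext htop

def wd (b : ℕ) (hb : 2 ≤ b) (n i : ℕ) : Fin b :=
  ⟨n / b ^ i % b, Nat.mod_lt _ (by omega)⟩

lemma mod_pow_succ_eq {b : ℕ} (hb : 2 ≤ b) (n k : ℕ) :
    n % b ^ (k + 1 + 1) = n % b ^ (k + 1) + n / b ^ (k + 1) % b * b ^ (k + 1) := by
  set m := b ^ (k + 1) with hm
  have hmpos : 0 < m := Nat.pow_pos (by omega)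
  set q := n / m with hq
  set s := n % m with hs
  have hn : n = m * (q % b) + s + m * b * (q / b) := by
    have h1 : n = m * q + s := (Nat.div_add_mod n m).symm
    have h2 : q = b * (q / b) + q % b := (Nat.div_add_mod q b).symm
    calc n = m * q + s := h1
    _ = m * (b * (q / b) + q % b) + s := by rw [← h2]
    _ = m * (q % b) + s + m * b * (q / b) := by ring
  have hlt : m * (q % b) + s < m * b := by
    have h3 : q % b < b := Nat.mod_lt _ (by omega)
    have h4 : s < m := Nat.mod_lt _ hmpos
    have h5 : m * (q % b) ≤ m * (b - 1) := Nat.mul_le_mul_left _ (by omega)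
    have h6 : m * (b - 1) + m = m * b := by
      have : b - 1 + 1 = b := by omega
      rw [← Nat.mul_succ, Nat.succ_eq_add_one, this]
    omega
  have hpow : b ^ (k + 1 + 1) = m * b := by rw [hm, pow_succ]
  rw [hpow, hn, Nat.mul_comm (m * b) (q / b), Nat.add_mul_mod_self_right,
    Nat.mod_eq_of_lt hlt]
  ring

lemma sum_wd {b : ℕ} (hb : 2 ≤ b) (n : ℕ) :
    ∀ k, ∑ i ∈ Finset.range (k + 1), (n / b ^ i % b) * b ^ i = n % b ^ (k + 1) := by
  intro k
  induction k with
  | zero => simp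
  | succ k ih =>
    rw [Finset.sum_range_succ, ih, mod_pow_succ_eq hb]

lemma valk_wd {b : ℕ} (hb : 2 ≤ b) {n k : ℕ} (hn : n < b ^ (k + 1)) :
    valk b (wd b hb n) k = n := by
  unfold valk wd
  simp only
  rw [sum_wd hb, Nat.mod_eq_of_lt hn]

lemma valk_eq_iff {b : ℕ} (hb : 2 ≤ b) {n k : ℕ} (hn : n < b ^ (k + 1)) (x : ℕ → Fin b) :
    valk b x k = n ↔ ∀ i < k + 1, x i = wd b hb n i := by
  constructor
  · intro h i hi
    exact valk_inj hb k x (wd b hb n) (by rw [h, valk_wd hb hn]) i (by omega)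
  · intro h
    rw [← valk_wd hb hn]
    unfold valk
    exact Finset.sum_congr rfl fun i hi => by
      rw [h i (Finset.mem_range.mp hi)]

lemma meas_cylinder {b : ℕ} (P : Measure (ℕ → Fin b)) (K : ℕ) (a : ℕ → Fin b) :
    MeasurableSet {x : ℕ → Fin b | ∀ i < K, x i = a i} := by
  have : {x : ℕ → Fin b | ∀ i < K, x i = a i}
      = ⋂ i ∈ Finset.range K, {x : ℕ → Fin b | x i = a i} := by
    ext x; simp
  rw [this]
  refine Finset.measurableSet_biInter _ fun i _ => ?_
  have : {x : ℕ → Fin b | x i = a i} = (fun x : ℕ → Fin b => x i) ⁻¹' {a i} := by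
    ext x; simp
  rw [this]
  exact (measurable_pi_apply i) (MeasurableSet.singleton (a i))

lemma meas_valk_pred {b : ℕ} (hb : 2 ≤ b) (P : Measure (ℕ → Fin b))
    (hP : ∀ (k : ℕ) (a : ℕ → Fin b),
      P {x | ∀ i < k, x i = a i} = (1 / (b : ENNReal)) ^ k)
    (k : ℕ) (Q : ℕ → Prop) [DecidablePred Q] :
    P {x | Q (valk b x k)}
      = ((Finset.range (b ^ (k + 1))).filter Q).card * (1 / (b : ENNReal)) ^ (k + 1) := by
  set S := (Finset.range (b ^ (k + 1))).filter Q with hS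
  have hset : {x : ℕ → Fin b | Q (valk b x k)} = ⋃ n ∈ S, {x | valk b x k = n} := by
    ext x
    simp only [Set.mem_setOf_eq, Set.mem_iUnion, exists_prop]
    constructor
    · intro hx
      exact ⟨valk b x k, by simp [hS, Finset.mem_filter, valk_lt hb x k, hx], rfl⟩
    · rintro ⟨n, hn, rfl⟩
      exact (Finset.mem_filter.mp hn).2
  have hcyl : ∀ n ∈ S, {x : ℕ → Fin b | valk b x k = n}
      = {x | ∀ i < k + 1, x i = wd b hb n i} := by
    intro n hn
    have hnlt : n < b ^ (k + 1) := Finset.mem_range.mp (Finset.mem_filter.mp hn).1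
    ext x
    exact valk_eq_iff hb hnlt x
  rw [hset, measure_biUnion_finset ?_ ?_]
  · rw [Finset.sum_congr rfl (fun n hn => by
      rw [hcyl n hn, hP (k + 1) (wd b hb n)])]
    rw [Finset.sum_const, nsmul_eq_mul]
  · intro m hm n hn hmn
    simp only [Function.onFun, Set.disjoint_left]
    intro x hxm hxn
    exact hmn (hxm ▸ hxn ▸ rfl)
  · intro n hn
    rw [hcyl n hn]
    exact meas_cylinder P (k + 1) (wd b hb n)

lemma good_succ {b : ℕ} (hb : 2 ≤ b) {r k : ℕ} {x : ℕ → Fin b}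
    (h : valk b x k + r < b ^ (k + 1)) :
    valk b x (k + 1) + r < b ^ (k + 1 + 1) ∧
      delta b r (valk b x (k + 1)) = delta b r (valk b x k) := by
  have hq : (x (k + 1) : ℕ) < b := (x (k + 1)).isLt
  have hv : valk b x (k + 1) = valk b x k + b ^ (k + 1) * (x (k + 1) : ℕ) := by
    rw [valk_succ]; ring
  constructor
  · rw [hv]
    have h1 : b ^ (k + 1) * (x (k + 1) : ℕ) ≤ b ^ (k + 1) * (b - 1) :=
      Nat.mul_le_mul_left _ (by omega)
    have h2 : b ^ (k + 1) + b ^ (k + 1) * (b - 1) = b ^ (k + 1 + 1) := by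
      rw [pow_succ]
      have : b - 1 + 1 = b := by omega
      calc b ^ (k + 1) + b ^ (k + 1) * (b - 1) = b ^ (k + 1) * (b - 1 + 1) := by ring
      _ = b ^ (k + 1) * b := by rw [this]
    omega
  · rw [hv]
    exact delta_add_pow_mul hb h _

lemma good_ge {b : ℕ} (hb : 2 ≤ b) {r k : ℕ} {x : ℕ → Fin b}
    (h : valk b x k + r < b ^ (k + 1)) :
    ∀ j, k ≤ j → valk b x j + r < b ^ (j + 1) ∧
      delta b r (valk b x j) = delta b r (valk b x k) := by
  intro j hj
  induction j with
  | zero =>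
    have : k = 0 := by omega
    subst this
    exact ⟨h, rfl⟩
  | succ j ih =>
    rcases Nat.lt_or_ge k (j + 1) with hk | hk
    · obtain ⟨h1, h2⟩ := ih (by omega)
      obtain ⟨h3, h4⟩ := good_succ hb h1
      exact ⟨h3, h4.trans h2⟩
    · have : k = j + 1 := by omega
      subst this
      exact ⟨h, rfl⟩

lemma deltak_of_good {b : ℕ} (hb : 2 ≤ b) {r k : ℕ} {x : ℕ → Fin b}
    (h : valk b x k + r < b ^ (k + 1)) :
    ∀ j, k ≤ j → deltak b r j x = delta b r (valk b x k) := by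
  intro j hj
  obtain ⟨h1, h2⟩ := good_ge hb h j hj
  unfold deltak
  rw [Nat.mod_eq_of_lt h1, ← h2]
  rfl

lemma deltaX_of_good {b : ℕ} (hb : 2 ≤ b) {r k : ℕ} {x : ℕ → Fin b}
    (h : valk b x k + r < b ^ (k + 1)) :
    deltaX b r x = delta b r (valk b x k) := by
  have htend : Tendsto (fun j => deltak b r j x) atTop (𝓝 (delta b r (valk b x k))) := by
    apply Tendsto.congr' (f₁ := fun _ => delta b r (valk b x k))
    · filter_upwards [eventually_ge_atTop k] with j hj
      exact (deltak_of_good hb h j hj).symm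
    · exact tendsto_const_nhds
  exact htend.limUnder_eq

section Main
variable {b : ℕ} (hb : 2 ≤ b) (r d : ℕ)
include hb

/-- the increasing "good with value d" events -/
def Ck (b r : ℕ) (d : ℤ) (k : ℕ) : Set (ℕ → Fin b) :=
  {x | valk b x k + r < b ^ (k + 1) ∧ delta b r (valk b x k) = d}

def cnt (b r : ℕ) (d : ℤ) (k : ℕ) : ℕ :=
  ((Finset.range (b ^ (k + 1))).filter
    (fun n => n + r < b ^ (k + 1) ∧ delta b r n = d)).card

lemma Ck_mono {r : ℕ} {d : ℤ} : Monotone (Ck b r d) := by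
  apply monotone_nat_of_le_succ
  intro k x hx
  obtain ⟨h1, h2⟩ := hx
  obtain ⟨h3, h4⟩ := good_succ hb h1
  exact ⟨h3, h4.trans h2⟩

lemma Ck_subset_A {r : ℕ} {d : ℤ} (k : ℕ) :
    Ck b r d k ⊆ {x | deltaX b r x = d} := by
  intro x ⟨h1, h2⟩
  exact (deltaX_of_good hb h1).trans h2

lemma A_subset {r : ℕ} {d : ℤ} :
    {x | deltaX b r x = d} ⊆ (⋃ k, Ck b r d k) ∪ (⋂ k, {x | ¬ (valk b x k + r < b ^ (k + 1))}) := by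
  intro x hx
  by_cases hg : ∃ k, valk b x k + r < b ^ (k + 1)
  · obtain ⟨k, hk⟩ := hg
    left
    exact Set.mem_iUnion.mpr ⟨k, hk, (deltaX_of_good hb hk).symm.trans hx⟩
  · right
    push_neg at hg
    refine Set.mem_iInter.mpr fun k => ?_
    simp only [Set.mem_setOf_eq, not_lt]
    exact hg k

lemma meas_Ck (P : Measure (ℕ → Fin b))
    (hP : ∀ (k : ℕ) (a : ℕ → Fin b),
      P {x | ∀ i < k, x i = a i} = (1 / (b : ENNReal)) ^ k) {d : ℤ} (k : ℕ) :
    P (Ck b r d k) = (cnt b r d k : ENNReal) * (1 / (b : ENNReal)) ^ (k + 1) :=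
  meas_valk_pred hb P hP k (fun n => n + r < b ^ (k + 1) ∧ delta b r n = (d : ℤ))

omit hb in
lemma card_bad (k : ℕ) :
    ((Finset.range (b ^ (k + 1))).filter (fun n => ¬ (n + r < b ^ (k + 1)))).card ≤ r := by
  have hsub : (Finset.range (b ^ (k + 1))).filter (fun n => ¬ (n + r < b ^ (k + 1)))
      ⊆ Finset.Ico (b ^ (k + 1) - r) (b ^ (k + 1)) := by
    intro n hn
    simp only [Finset.mem_filter, Finset.mem_range] at hn
    simp only [Finset.mem_Ico]
    omega
  calc _ ≤ (Finset.Ico (b ^ (k + 1) - r) (b ^ (k + 1))).card := Finset.card_le_card hsub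
  _ = b ^ (k + 1) - (b ^ (k + 1) - r) := Nat.card_Ico _ _
  _ ≤ r := by omega

lemma meas_bad (P : Measure (ℕ → Fin b))
    (hP : ∀ (k : ℕ) (a : ℕ → Fin b),
      P {x | ∀ i < k, x i = a i} = (1 / (b : ENNReal)) ^ k) (k : ℕ) :
    P {x | ¬ (valk b x k + r < b ^ (k + 1))} ≤ (r : ENNReal) * (1 / (b : ENNReal)) ^ (k + 1) := by
  rw [meas_valk_pred hb P hP k (fun n => ¬ (n + r < b ^ (k + 1)))]
  exact mul_le_mul_left (by exact_mod_cast Nat.cast_le.mpr (card_bad r k)) _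

end Main

section Main2
variable {b : ℕ} (hb : 2 ≤ b) (r : ℕ)
include hb

lemma measurableSet_valk_pred (k : ℕ) (Q : ℕ → Prop) [DecidablePred Q] :
    MeasurableSet {x : ℕ → Fin b | Q (valk b x k)} := by
  have hset : {x : ℕ → Fin b | Q (valk b x k)}
      = ⋃ n ∈ (Finset.range (b ^ (k + 1))).filter Q,
          {x : ℕ → Fin b | ∀ i < k + 1, x i = wd b hb n i} := by
    ext x
    simp only [Set.mem_setOf_eq, Set.mem_iUnion, exists_prop, Finset.mem_filter,
      Finset.mem_range]
    constructor
    · intro hx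
      exact ⟨valk b x k, ⟨valk_lt hb x k, hx⟩,
        (valk_eq_iff hb (valk_lt hb x k) x).mp rfl⟩
    · rintro ⟨n, ⟨hn1, hn2⟩, hcyl⟩
      rwa [(valk_eq_iff hb hn1 x).mpr hcyl]
  rw [hset]
  exact MeasurableSet.biUnion (Set.to_countable _) fun n _ => meas_cylinder (0 : Measure _) _ _

lemma measurableSet_Ck (d : ℤ) (k : ℕ) : MeasurableSet (Ck b r d k) :=
  measurableSet_valk_pred hb (k := k) (fun n => n + r < b ^ (k + 1) ∧ delta b r n = d)

variable (P : Measure (ℕ → Fin b))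
  (hP : ∀ (k : ℕ) (a : ℕ → Fin b),
      P {x | ∀ i < k, x i = a i} = (1 / (b : ENNReal)) ^ k)
include hP

lemma P_univ : P Set.univ = 1 := by
  have := hP 0 (fun _ => ⟨0, by omega⟩)
  simpa using this

lemma P_bad_zero : P (⋂ k, {x : ℕ → Fin b | ¬ (valk b x k + r < b ^ (k + 1))}) = 0 := by
  set B := ⋂ k, {x : ℕ → Fin b | ¬ (valk b x k + r < b ^ (k + 1))} with hB
  have hle : ∀ k, P B ≤ (r : ENNReal) * (1 / (b : ENNReal)) ^ (k + 1) := fun k =>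
    le_trans (measure_mono (Set.iInter_subset _ k)) (meas_bad hb r P hP k)
  have hlt1 : (1 / (b : ENNReal)) < 1 := by
    rw [one_div, ENNReal.inv_lt_one]
    exact_mod_cast Nat.one_lt_cast.mpr (by omega)
  have htend0 : Tendsto (fun k : ℕ => (1 / (b : ENNReal)) ^ k) atTop (𝓝 0) :=
    ENNReal.tendsto_pow_atTop_nhds_zero_of_lt_one hlt1
  have htend : Tendsto (fun k : ℕ => (r : ENNReal) * (1 / (b : ENNReal)) ^ (k + 1))
      atTop (𝓝 0) := by
    have h1 : Tendsto (fun k : ℕ => (1 / (b : ENNReal)) ^ (k + 1)) atTop (𝓝 0) :=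
      htend0.comp (tendsto_add_atTop_nat 1)
    have := ENNReal.Tendsto.const_mul (a := (r : ENNReal)) h1
      (Or.inr (ENNReal.natCast_ne_top r))
    simpa using this
  have : P B ≤ 0 := ge_of_tendsto' htend hle
  simpa using this

lemma P_A_eq_P_M (d : ℤ) :
    P {x | deltaX b r x = d} = P (⋃ k, Ck b r d k) := by
  apply le_antisymm
  · calc P {x | deltaX b r x = d}
        ≤ P ((⋃ k, Ck b r d k) ∪ (⋂ k, {x | ¬ (valk b x k + r < b ^ (k + 1))})) :=
          measure_mono (A_subset hb)
    _ ≤ P (⋃ k, Ck b r d k) + P (⋂ k, {x | ¬ (valk b x k + r < b ^ (k + 1))}) :=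
          measure_union_le _ _
    _ = P (⋃ k, Ck b r d k) := by rw [P_bad_zero hb r P hP, add_zero]
  · exact measure_mono (Set.iUnion_subset fun k => Ck_subset_A hb k)

lemma P_M_tendsto (d : ℤ) :
    Tendsto (fun k => (cnt b r d k : ENNReal) * (1 / (b : ENNReal)) ^ (k + 1)) atTop
      (𝓝 (P (⋃ k, Ck b r d k))) := by
  have := tendsto_measure_iUnion_atTop (μ := P) (Ck_mono hb (r := r) (d := d))
  apply this.congr
  intro k
  exact meas_Ck hb r P hP k

lemma P_A_ne_top (s : Set (ℕ → Fin b)) : P s ≠ ⊤ := by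
  have h1 : P s ≤ 1 := le_trans (measure_mono (Set.subset_univ s)) (le_of_eq (P_univ hb P hP))
  exact ne_top_of_le_ne_top ENNReal.one_ne_top h1

lemma density_limit (d : ℤ) :
    Tendsto (fun k => (cnt b r d k : ℝ) / (b : ℝ) ^ (k + 1)) atTop
      (𝓝 ((P {x | deltaX b r x = d}).toReal)) := by
  rw [P_A_eq_P_M hb r P hP d]
  have h1 := (ENNReal.tendsto_toReal (P_A_ne_top hb P hP _)).comp
    (P_M_tendsto hb r P hP d)
  apply h1.congr
  intro k
  show ((cnt b r d k : ENNReal) * (1 / (b : ENNReal)) ^ (k + 1)).toReal = _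
  have hb0 : (b : ENNReal) ≠ 0 := by exact_mod_cast (by omega : b ≠ 0)
  rw [ENNReal.toReal_mul, ENNReal.toReal_pow, one_div, ENNReal.toReal_inv]
  simp [div_eq_mul_inv, inv_pow]

end Main2

section Main3
variable {b : ℕ} (hb : 2 ≤ b) (r : ℕ)
  (P : Measure (ℕ → Fin b))
  (hP : ∀ (k : ℕ) (a : ℕ → Fin b),
      P {x | ∀ i < k, x i = a i} = (1 / (b : ENNReal)) ^ k)
include hb hP

lemma hasSum_part :
    HasSum (fun d : ℤ => (P {x | deltaX b r x = d}).toReal) 1 := by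
  set M : ℤ → Set (ℕ → Fin b) := fun d => ⋃ k, Ck b r d k with hM
  have hmeas : ∀ d, MeasurableSet (M d) := fun d =>
    MeasurableSet.iUnion fun k => measurableSet_Ck hb r d k
  have hdisj : Pairwise (Function.onFun Disjoint M) := by
    intro d d' hdd'
    rw [Function.onFun, Set.disjoint_left]
    intro x hx hx'
    have h1 : deltaX b r x = d :=
      Set.iUnion_subset (fun k => Ck_subset_A hb k) hx
    have h2 : deltaX b r x = d' :=
      Set.iUnion_subset (fun k => Ck_subset_A hb k) hx'
    exact hdd' (h1 ▸ h2)
  have hunion : ⋃ d, M d = ⋃ k, {x : ℕ → Fin b | valk b x k + r < b ^ (k + 1)} := by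
    apply Set.Subset.antisymm
    · refine Set.iUnion_subset fun d => Set.iUnion_subset fun k => ?_
      intro x hx
      exact Set.mem_iUnion.mpr ⟨k, hx.1⟩
    · refine Set.iUnion_subset fun k => ?_
      intro x hx
      exact Set.mem_iUnion.mpr ⟨delta b r (valk b x k),
        Set.mem_iUnion.mpr ⟨k, hx, rfl⟩⟩
  have hcompl : (⋃ k, {x : ℕ → Fin b | valk b x k + r < b ^ (k + 1)})ᶜ
      = ⋂ k, {x : ℕ → Fin b | ¬ (valk b x k + r < b ^ (k + 1))} := by
    rw [Set.compl_iUnion]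
    rfl
  have hG1 : P (⋃ d, M d) = 1 := by
    rw [hunion]
    set G := ⋃ k, {x : ℕ → Fin b | valk b x k + r < b ^ (k + 1)} with hGdef
    have hGm : MeasurableSet G :=
      MeasurableSet.iUnion fun k => measurableSet_valk_pred hb k
        (fun n => n + r < b ^ (k + 1))
    have hGc : P Gᶜ = 0 := by rw [hcompl]; exact P_bad_zero hb r P hP
    have h2 := measure_compl hGm (P_A_ne_top hb P hP G)
    rw [hGc, P_univ hb P hP] at h2
    have h3 : P G ≤ 1 := le_trans (measure_mono (Set.subset_univ _))
      (le_of_eq (P_univ hb P hP))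
    have h4 : (1 : ENNReal) ≤ P G := by
      rw [eq_comm, tsub_eq_zero_iff_le] at h2
      exact h2
    exact le_antisymm h3 h4
  have htsum : ∑' d : ℤ, P (M d) = 1 := by
    rw [← measure_iUnion hdisj hmeas, hG1]
  have hAeq : ∀ d : ℤ, P {x | deltaX b r x = d} = P (M d) := fun d =>
    P_A_eq_P_M hb r P hP d
  have hne : ∀ d : ℤ, P (M d) ≠ ⊤ := fun d => P_A_ne_top hb P hP _
  have h5 := ENNReal.hasSum_toReal (f := fun d : ℤ => P (M d)) (by rw [htsum]; exact ENNReal.one_ne_top)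
  rw [← ENNReal.tsum_toReal_eq hne, htsum, ENNReal.toReal_one] at h5
  apply HasSum.congr_fun h5
  intro d
  rw [hAeq d]
end Main3

section Count
variable {b : ℕ} (hb : 2 ≤ b) (r : ℕ) (d : ℤ)
include hb

lemma count_Ico_eq (q k : ℕ) :
    ((Finset.Ico (q * b ^ (k + 1)) (q * b ^ (k + 1) + b ^ (k + 1))).filter
        (fun n => delta b r n = d)).card
      = ((Finset.range (b ^ (k + 1))).filter
        (fun n => delta b r (q * b ^ (k + 1) + n) = d)).card := by
  set m := b ^ (k + 1) with hm
  rw [show (Finset.Ico (q * m) (q * m + m)).filter (fun n => delta b r n = d)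
      = ((Finset.range m).filter (fun n => delta b r (q * m + n) = d)).image
          (fun n => q * m + n) from ?_]
  · exact Finset.card_image_of_injective _ (add_right_injective _)
  · ext t
    simp only [Finset.mem_filter, Finset.mem_Ico, Finset.mem_image, Finset.mem_range]
    constructor
    · rintro ⟨⟨h1, h2⟩, h3⟩
      exact ⟨t - q * m, ⟨by omega, by rw [show q * m + (t - q * m) = t by omega]; exact h3⟩,
        by omega⟩
    · rintro ⟨n, ⟨hn1, hn2⟩, rfl⟩
      exact ⟨⟨by omega, by omega⟩, hn2⟩

lemma count_block_bounds (q k : ℕ) :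
    cnt b r d k ≤ ((Finset.Ico (q * b ^ (k + 1)) (q * b ^ (k + 1) + b ^ (k + 1))).filter
        (fun n => delta b r n = d)).card ∧
    ((Finset.Ico (q * b ^ (k + 1)) (q * b ^ (k + 1) + b ^ (k + 1))).filter
        (fun n => delta b r n = d)).card ≤ cnt b r d k + r := by
  rw [count_Ico_eq hb r d q k]
  set m := b ^ (k + 1) with hm
  have hdel : ∀ n, n + r < m → delta b r (q * m + n) = delta b r n := by
    intro n hn
    have := delta_add_pow_mul hb (K := k + 1) (m := n) (r := r) hn q
    rw [show n + b ^ (k + 1) * q = q * m + n by rw [hm]; ring] at this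
    exact this
  constructor
  · apply Finset.card_le_card
    intro n hn
    simp only [cnt, Finset.mem_filter, Finset.mem_range, ← hm] at hn ⊢
    exact ⟨hn.1, by rw [hdel n hn.2.1]; exact hn.2.2⟩
  · calc ((Finset.range m).filter (fun n => delta b r (q * m + n) = d)).card
        ≤ (((Finset.range m).filter (fun n => n + r < m ∧ delta b r n = d))
            ∪ ((Finset.range m).filter (fun n => ¬ (n + r < m)))).card := by
          apply Finset.card_le_card
          intro n hn
          simp only [Finset.mem_filter, Finset.mem_range, Finset.mem_union] at hn ⊢
          by_cases hc : n + r < m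
          · exact Or.inl ⟨hn.1, hc, by rw [← hdel n hc]; exact hn.2⟩
          · exact Or.inr ⟨hn.1, hc⟩
    _ ≤ _ := by
          apply le_trans (Finset.card_union_le _ _)
          have h2 := card_bad (b := b) r k
          rw [← hm] at h2
          simp only [cnt, ← hm]
          omega

lemma F_bounds (k : ℕ) :
    ∀ Q, Q * cnt b r d k ≤ ((Finset.range (Q * b ^ (k + 1))).filter
        (fun n => delta b r n = d)).card ∧
      ((Finset.range (Q * b ^ (k + 1))).filter (fun n => delta b r n = d)).card
        ≤ Q * (cnt b r d k + r) := by
  intro Q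
  induction Q with
  | zero => simp
  | succ Q ih =>
    set m := b ^ (k + 1) with hm
    have hsplit : (Finset.range ((Q + 1) * m)).filter (fun n => delta b r n = d)
        = ((Finset.range (Q * m)).filter (fun n => delta b r n = d))
          ∪ ((Finset.Ico (Q * m) (Q * m + m)).filter (fun n => delta b r n = d)) := by
      rw [← Finset.filter_union]
      congr 1
      rw [Finset.range_eq_Ico, Finset.range_eq_Ico, show (Q + 1) * m = Q * m + m by ring]
      exact (Finset.Ico_union_Ico_eq_Ico (Nat.zero_le _) (Nat.le_add_right _ _)).symm
    have hdisj : Disjoint ((Finset.range (Q * m)).filter (fun n => delta b r n = d))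
        ((Finset.Ico (Q * m) (Q * m + m)).filter (fun n => delta b r n = d)) := by
      apply Finset.disjoint_filter_filter
      rw [Finset.range_eq_Ico]
      exact Finset.Ico_disjoint_Ico_consecutive 0 (Q * m) (Q * m + m)
    rw [hsplit, Finset.card_union_of_disjoint hdisj]
    obtain ⟨hlo, hhi⟩ := count_block_bounds hb r d Q k
    rw [← hm] at hlo hhi
    constructor
    · calc (Q + 1) * cnt b r d k = Q * cnt b r d k + cnt b r d k := by ring
      _ ≤ _ := Nat.add_le_add ih.1 hlo
    · calc _ ≤ Q * (cnt b r d k + r) + (cnt b r d k + r) := Nat.add_le_add ih.2 hhi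
      _ = (Q + 1) * (cnt b r d k + r) := by ring

lemma F_mono (N N' : ℕ) (h : N ≤ N') :
    ((Finset.range N).filter (fun n => delta b r n = d)).card
      ≤ ((Finset.range N').filter (fun n => delta b r n = d)).card :=
  Finset.card_le_card (Finset.filter_subset_filter _ (Finset.range_subset_range.mpr h))

lemma F_global_bounds (k N : ℕ) :
    (N - b ^ (k + 1)) * cnt b r d k
        ≤ ((Finset.range N).filter (fun n => delta b r n = d)).card * b ^ (k + 1) ∧
      ((Finset.range N).filter (fun n => delta b r n = d)).card * b ^ (k + 1)
        ≤ (N + b ^ (k + 1)) * (cnt b r d k + r) := by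
  set m := b ^ (k + 1) with hm
  have hmpos : 0 < m := Nat.pow_pos (by omega)
  set Q := N / m with hQ
  have h1 : Q * m ≤ N := Nat.div_mul_le_self N m
  have h3 : Q * m + N % m = N := by rw [hQ, mul_comm]; exact Nat.div_add_mod N m
  have h4 : N % m < m := Nat.mod_lt _ hmpos
  have h2 : N < Q * m + m := by omega
  have h2' : N ≤ (Q + 1) * m := by
    rw [show (Q + 1) * m = Q * m + m from by ring]; omega
  have h5 : (Q + 1) * m ≤ N + m := by
    rw [show (Q + 1) * m = Q * m + m from by ring]; omega
  obtain ⟨hloQ, _⟩ := F_bounds hb r d k Q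
  obtain ⟨_, hhiQ⟩ := F_bounds hb r d k (Q + 1)
  have hFlo := le_trans hloQ (F_mono hb r d _ _ h1)
  have hFhi := le_trans (F_mono hb r d _ _ h2') hhiQ
  constructor
  · calc (N - m) * cnt b r d k ≤ (Q * m) * cnt b r d k :=
        Nat.mul_le_mul_right _ (by omega)
    _ = (Q * cnt b r d k) * m := by ring
    _ ≤ _ := Nat.mul_le_mul_right _ hFlo
  · calc ((Finset.range N).filter (fun n => delta b r n = d)).card * m
        ≤ ((Q + 1) * (cnt b r d k + r)) * m := Nat.mul_le_mul_right _ hFhi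
    _ = ((Q + 1) * m) * (cnt b r d k + r) := by ring
    _ ≤ (N + m) * (cnt b r d k + r) := Nat.mul_le_mul_right _ h5

end Count

/-- **Corollary (existence of the densities).** For every `r ≥ 1` and `d ∈ ℤ`, the natural
density `μ^(r)(d) = lim_N (1/N)·|{n < N : Δ^(r)(n) = d}|` exists and equals
`ℙ({x ∈ X : Δ^(r)(x) = d})`; moreover `Σ_{d ∈ ℤ} μ^(r)(d) = 1`. -/
theorem density_eq_measure (b : ℕ) (hb : 2 ≤ b)
    (P : Measure (ℕ → Fin b))
    (hP : ∀ (k : ℕ) (a : ℕ → Fin b),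
      P {x | ∀ i < k, x i = a i} = (1 / (b : ENNReal)) ^ k)
    (r : ℕ) (hr : 1 ≤ r) :
    (∀ d : ℤ,
      Tendsto (fun N : ℕ =>
          (((Finset.range N).filter fun n => delta b r n = d).card : ℝ) / N)
        atTop (𝓝 ((P {x | deltaX b r x = d}).toReal))) ∧
    HasSum (fun d : ℤ => (P {x | deltaX b r x = d}).toReal) 1 := by
  refine ⟨?_, hasSum_part hb r P hP⟩
  intro d
  have hlim := density_limit hb r P hP d
  set L := (P {x | deltaX b r x = d}).toReal with hL
  rw [Metric.tendsto_atTop] at hlim ⊢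
  intro ε hε
  have hb1 : (1:ℝ) < (b:ℝ) := by exact_mod_cast (by omega : 1 < b)
  have hpowR : Tendsto (fun k : ℕ => (b:ℝ) ^ (k+1)) atTop atTop :=
    (tendsto_pow_atTop_atTop_of_one_lt hb1).comp (tendsto_add_atTop_nat 1)
  have hr0 : Tendsto (fun k : ℕ => (r:ℝ) / (b:ℝ)^(k+1)) atTop (𝓝 0) :=
    tendsto_const_nhds.div_atTop hpowR
  obtain ⟨K1, hK1⟩ := hlim (ε/4) (by positivity)
  obtain ⟨K2, hK2⟩ := Metric.tendsto_atTop.mp hr0 (ε/4) (by positivity)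
  obtain ⟨K3, hK3⟩ := (hpowR.eventually_ge_atTop (r:ℝ)).exists_forall_of_atTop
  set k := max K1 (max K2 K3) with hk
  set m := b ^ (k + 1) with hm
  set c := cnt b r d k with hc
  have hmR : ((m : ℕ) : ℝ) = (b:ℝ)^(k+1) := by rw [hm]; push_cast; ring
  set mR := ((m : ℕ) : ℝ) with hmRdef
  have hm0 : 0 < mR := by rw [hmR]; positivity
  have ha : |(c:ℝ)/mR - L| < ε/4 := by
    have := hK1 k (le_max_left _ _)
    rwa [Real.dist_eq, ← hmR] at this
  have hrm : (r:ℝ)/mR < ε/4 := by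
    have := hK2 k (le_trans (le_max_left _ _) (le_max_right _ _))
    rw [Real.dist_eq, sub_zero, ← hmR] at this
    exact lt_of_abs_lt this
  have hrle : (r:ℝ) ≤ mR := by
    have := hK3 k (le_trans (le_max_right _ _) (le_max_right _ _))
    rwa [← hmR] at this
  have hcle : (c:ℝ) ≤ mR := by
    have h1 : c ≤ m := le_trans (Finset.card_filter_le _ _) (by simp [hm])
    rw [hmRdef]
    exact_mod_cast h1
  have hLle : L ≤ 1 + ε/4 := by
    have h1 : (c:ℝ)/mR ≤ 1 := by
      rw [div_le_one hm0]; exact hcle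
    have h2 := abs_sub_lt_iff.mp ha
    linarith [h2.2]
  have hL0 : 0 ≤ L := ENNReal.toReal_nonneg
  obtain ⟨N0, hN0⟩ := exists_nat_gt (2*(1+ε)*mR/ε + mR + 1)
  refine ⟨N0, fun N hN => ?_⟩
  have hNR : (N:ℝ) ≥ N0 := by exact_mod_cast hN
  have hNbound : (N:ℝ) > 2*(1+ε)*mR/ε + mR + 1 := lt_of_lt_of_le hN0 hNR
  have hdiv : 2*(1+ε)*mR/ε ≥ 0 := by positivity
  have hmRN : mR < (N:ℝ) := by linarith
  have hN1 : (0:ℝ) < N := by linarith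
  have hNbig : 2*(1+ε)*mR < ε*(N:ℝ) := by
    have h1 : 2*(1+ε)*mR/ε < (N:ℝ) := by linarith
    have h2 := (div_lt_iff₀ hε).mp h1
    linarith [h2, mul_comm ε (N:ℝ)]
  have hmN : m ≤ N := by
    have h1 : (m:ℝ) < (N:ℝ) := by rw [← hmRdef]; exact hmRN
    exact_mod_cast le_of_lt h1
  obtain ⟨hLoN, hUpN⟩ := F_global_bounds hb r d k N
  set FN := ((Finset.range N).filter fun n => delta b r n = d).card with hFN
  set u := (FN : ℝ) with hu
  have hUp : u * mR ≤ ((N:ℝ) + mR) * ((c:ℝ) + (r:ℝ)) := by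
    rw [hu, hmRdef, hc, hm]
    exact_mod_cast hUpN
  have hLo : ((N:ℝ) - mR) * (c:ℝ) ≤ u * mR := by
    rw [hu, hmRdef, hc, hm]
    have h2 : (((N - b ^ (k + 1) : ℕ)):ℝ) * ((cnt b r d k : ℕ):ℝ)
        ≤ (FN:ℝ) * ((b ^ (k + 1) : ℕ):ℝ) := by exact_mod_cast hLoN
    rw [Nat.cast_sub hmN] at h2
    exact_mod_cast h2
  have hadp := abs_sub_lt_iff.mp ha
  have hcup : (c:ℝ) < (L + ε/4) * mR := by
    have h2 : (c:ℝ)/mR < L + ε/4 := by linarith [hadp.1]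
    exact (div_lt_iff₀ hm0).mp h2
  have hclo : (L - ε/4) * mR < (c:ℝ) := by
    have h2 : L - ε/4 < (c:ℝ)/mR := by linarith [hadp.2]
    exact (lt_div_iff₀ hm0).mp h2
  have hrup : (r:ℝ) < (ε/4) * mR := by
    rw [div_lt_iff₀ hm0] at hrm
    exact hrm
  have hu0 : 0 ≤ u := by rw [hu]; positivity
  have hc0 : (0:ℝ) ≤ c := by positivity
  have hmL : mR * L ≤ mR * (1 + ε/4) := mul_le_mul_of_nonneg_left hLle hm0.le
  clear_value L k c mR FN u
  clear hlim hK1 hK2 hK3 hr0 hpowR hP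
  rw [Real.dist_eq, abs_sub_lt_iff]
  constructor
  · -- u / N - L < ε
    have hstep : u * mR < (((N:ℝ) + mR) * (L + ε/2)) * mR := by
      calc u * mR ≤ ((N:ℝ) + mR) * ((c:ℝ) + (r:ℝ)) := hUp
      _ < ((N:ℝ) + mR) * ((L + ε/4)*mR + (ε/4)*mR) := by
          apply mul_lt_mul_of_pos_left (by linarith) (by linarith)
      _ = (((N:ℝ) + mR) * (L + ε/2)) * mR := by ring
    have hub : u < ((N:ℝ) + mR) * (L + ε/2) :=
      lt_of_mul_lt_mul_right hstep hm0.le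
    have haux : mR * (L + ε/2) < (ε/2) * (N:ℝ) := by
      linarith [hmL, hNbig, mul_nonneg hm0.le hε.le]
    have hkey : u < (N:ℝ) * L + ε * (N:ℝ) := by linarith [hub, haux]
    have : u / (N:ℝ) < L + ε := by
      rw [div_lt_iff₀ hN1]
      linarith [hkey]
    linarith
  · -- L - u / N < ε
    rcases le_or_gt L (ε/2) with hLε | hLε
    · have h1 : 0 ≤ u / (N:ℝ) := by positivity
      linarith
    · have hLpos : 0 < L - ε/4 := by linarith
      have h8 : (((N:ℝ) - mR) * (L - ε/4)) * mR ≤ u * mR := by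
        calc (((N:ℝ) - mR) * (L - ε/4)) * mR = ((N:ℝ) - mR) * ((L - ε/4) * mR) := by ring
        _ ≤ ((N:ℝ) - mR) * (c:ℝ) :=
            mul_le_mul_of_nonneg_left hclo.le (by linarith)
        _ ≤ u * mR := hLo
      have h9 : ((N:ℝ) - mR) * (L - ε/4) ≤ u := le_of_mul_le_mul_right h8 hm0
      have haux2 : mR * (L - ε/4) < (ε/2) * (N:ℝ) := by
        linarith [hmL, hNbig, mul_nonneg hm0.le hε.le]
      have hkey : (L - ε) * (N:ℝ) < u := by
        linarith [h9, haux2, mul_pos hε hN1]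
      have : L - ε < u / (N:ℝ) := by
        rw [lt_div_iff₀ hN1]
        exact hkey
      linarith
end
end

section
/- Let r ≥ 1. For every integer N ≥ 1, every k ∈ ℕ and all d, d' ∈ ℤ, one has (1/N)·|{n < N : Δ^(r)(n) = d and Δ_k^(r)(n) = d'}| ≤ r·b·ℙ({x ∈ X : Δ^(r)(x) = d and Δ_k^(r)(x) = d'}); in particular, (1/N)·|{n < N : Δ^(r)(n) = d}| ≤ r·b·ℙ({x ∈ X : Δ^(r)(x) = d}). -/
open Filter Topology MeasureTheory

noncomputable section

/-- `Δ_k^(r)` applied to the digit sequence of an integer `n`: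
`Δ_k^(r)(n) = s_k(n+r) - s_k(n)` where `s_k` sums the first `k+1` base-`b` digits. -/
def deltakNat (b r k n : ℕ) : ℤ :=
  (digitSum b ((n + r) % b ^ (k + 1)) : ℤ) - (digitSum b (n % b ^ (k + 1)) : ℤ)

lemma digitSum_eq {b : ℕ} (hb : 2 ≤ b) (n : ℕ) :
    digitSum b n = n % b + digitSum b (n / b) := by
  rcases Nat.eq_zero_or_pos n with h | h
  · subst h; simp [digitSum]
  · rw [digitSum, Nat.digits_def' hb h]; simp [digitSum]

lemma digitSum_add_mul_pow {b : ℕ} (hb : 2 ≤ b) :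
    ∀ (L m t : ℕ), m < b ^ L → digitSum b (m + t * b ^ L) = digitSum b m + digitSum b t := by
  intro L
  induction L with
  | zero =>
    intro m t hm
    simp only [pow_zero, Nat.lt_one_iff] at hm
    subst hm
    simp [digitSum]
  | succ L ih =>
    intro m t hm
    have hb0 : 0 < b := by omega
    have h1 : m + t * b ^ (L + 1) = m + (t * b ^ L) * b := by ring
    have h2 : (m + (t * b ^ L) * b) % b = m % b := Nat.add_mul_mod_self_right m _ b
    have h3 : (m + (t * b ^ L) * b) / b = m / b + t * b ^ L :=
      Nat.add_mul_div_right m _ hb0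
    have h4 : m / b < b ^ L := by
      rw [Nat.div_lt_iff_lt_mul hb0]; rw [pow_succ] at hm; exact hm
    rw [h1, digitSum_eq hb (m + (t * b ^ L) * b), h2, h3, ih _ t h4,
      digitSum_eq hb m]
    omega

/-- digit `i` of `n` in base `b`. -/
def dig (b n i : ℕ) : ℕ := n / b ^ i % b

lemma sum_dig {b : ℕ} (hb : 2 ≤ b) (n : ℕ) :
    ∀ m, ∑ i ∈ Finset.range m, dig b n i * b ^ i = n % b ^ m := by
  intro m
  induction m with
  | zero => simp [Nat.mod_one]
  | succ m ih =>
    rw [Finset.sum_range_succ, ih]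
    have : n % b ^ (m + 1) = n % (b ^ m * b) := by rw [pow_succ]
    rw [this, Nat.mod_mul]
    simp [dig]; ring

lemma sum_lt_pow {b : ℕ} (hb : 2 ≤ b) (f : ℕ → ℕ) (hf : ∀ i, f i < b) :
    ∀ M, ∑ j ∈ Finset.range M, f j * b ^ j < b ^ M := by
  intro M
  induction M with
  | zero => simp
  | succ M ih =>
    rw [Finset.sum_range_succ, pow_succ]
    have := hf M
    have hbM : 0 < b ^ M := Nat.pow_pos (n := M) (by omega)
    nlinarith

lemma valk_eq_of_lt {b : ℕ} (hb : 2 ≤ b) {n L k : ℕ} (x : ℕ → Fin b)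
    (hx : ∀ i < L, (x i : ℕ) = dig b n i) (hk : k + 1 ≤ L) :
    valk b x k = n % b ^ (k + 1) := by
  rw [valk, ← sum_dig hb n (k + 1)]
  exact Finset.sum_congr rfl fun i hi => by
    rw [hx i (lt_of_lt_of_le (Finset.mem_range.mp hi) hk)]

lemma valk_eq_of_ge {b : ℕ} (hb : 2 ≤ b) {n L k : ℕ} (x : ℕ → Fin b) (hn : n < b ^ L)
    (hx : ∀ i < L, (x i : ℕ) = dig b n i) (hk : L ≤ k) :
    ∃ t < b ^ (k + 1 - L), valk b x k = n + t * b ^ L := by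
  refine ⟨∑ j ∈ Finset.range (k + 1 - L), (x (L + j) : ℕ) * b ^ j,
    sum_lt_pow hb _ (fun i => (x _).2) _, ?_⟩
  rw [valk, ← Finset.sum_range_add_sum_Ico _ (show L ≤ k + 1 by omega)]
  congr 1
  · rw [Finset.sum_congr rfl (fun i hi => by rw [hx i (Finset.mem_range.mp hi)]),
      sum_dig hb, Nat.mod_eq_of_lt hn]
  · rw [Finset.sum_Ico_eq_sum_range, Finset.sum_mul]
    refine Finset.sum_congr rfl fun j hj => ?_
    rw [pow_add]; ring

lemma deltak_cyl {b : ℕ} (hb : 2 ≤ b) {n L r k : ℕ} (x : ℕ → Fin b) (hnr : n + r < b ^ L)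
    (hx : ∀ i < L, (x i : ℕ) = dig b n i) :
    deltak b r k x = deltakNat b r k n := by
  rcases le_or_gt (k + 1) L with hk | hk
  · rw [deltak, valk_eq_of_lt hb x hx hk, deltakNat, Nat.mod_add_mod]
  · obtain ⟨t, ht, hv⟩ := valk_eq_of_ge hb (L := L) (k := k) x (by omega) hx (by omega)
    have hpow : b ^ (k + 1 - L) * b ^ L = b ^ (k + 1) := by
      rw [← pow_add]; congr 1; omega
    have h2 : (t + 1) * b ^ L = t * b ^ L + b ^ L := by ring
    have h3 : (t + 1) * b ^ L ≤ b ^ (k + 1) := by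
      have h4 : t + 1 ≤ b ^ (k + 1 - L) := ht
      calc (t + 1) * b ^ L ≤ b ^ (k + 1 - L) * b ^ L :=
            Nat.mul_le_mul_right _ h4
        _ = b ^ (k + 1) := hpow
    have h1 : n + r + t * b ^ L < b ^ (k + 1) := by omega
    have hB : n + r < b ^ (k + 1) :=
      lt_of_lt_of_le hnr (Nat.pow_le_pow_right (by omega) (by omega))
    rw [deltak, hv, deltakNat]
    have e1 : n + t * b ^ L + r = n + r + t * b ^ L := by ring
    rw [e1, Nat.mod_eq_of_lt h1, Nat.mod_eq_of_lt hB,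
      Nat.mod_eq_of_lt (show n < b ^ (k + 1) by omega),
      digitSum_add_mul_pow hb L (n + r) t hnr,
      digitSum_add_mul_pow hb L n t (by omega)]
    push_cast; ring

lemma deltakNat_eq_delta {b r k n : ℕ} (h : n + r < b ^ (k + 1)) :
    deltakNat b r k n = delta b r n := by
  rw [deltakNat, delta, Nat.mod_eq_of_lt h, Nat.mod_eq_of_lt (by omega)]

lemma deltaX_cyl {b : ℕ} (hb : 2 ≤ b) {n L r : ℕ} (x : ℕ → Fin b) (hnr : n + r < b ^ L)
    (hx : ∀ i < L, (x i : ℕ) = dig b n i) : deltaX b r x = delta b r n := by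
  apply Filter.Tendsto.limUnder_eq
  apply Tendsto.congr' _ tendsto_const_nhds
  filter_upwards [eventually_ge_atTop L] with k hk
  exact ((deltak_cyl hb x hnr hx).trans (deltakNat_eq_delta
    (lt_of_lt_of_le hnr (Nat.pow_le_pow_right (by omega) (by omega))))).symm

def ext (b : ℕ) (hb : 2 ≤ b) (n : ℕ) : ℕ → Fin b :=
  fun i => ⟨dig b n i, Nat.mod_lt _ (by omega)⟩

lemma cyl_measurable {b : ℕ} (a : ℕ → Fin b) (L : ℕ) :
    MeasurableSet {x : ℕ → Fin b | ∀ i < L, x i = a i} := by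
  have h : {x : ℕ → Fin b | ∀ i < L, x i = a i} =
      ⋂ i ∈ Finset.range L, {x : ℕ → Fin b | x i = a i} := by
    ext x; simp
  rw [h]
  refine Finset.measurableSet_biInter _ fun i _ => ?_
  have : {x : ℕ → Fin b | x i = a i} = (fun x : ℕ → Fin b => x i) ⁻¹' {a i} := rfl
  rw [this]
  exact measurable_pi_apply i (measurableSet_singleton (a i))

lemma cyl_disjoint {b : ℕ} (hb : 2 ≤ b) {L m n : ℕ} (hm : m < b ^ L) (hn : n < b ^ L)
    (hmn : m ≠ n) :
    Disjoint {x : ℕ → Fin b | ∀ i < L, x i = ext b hb m i}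
             {x : ℕ → Fin b | ∀ i < L, x i = ext b hb n i} := by
  rw [Set.disjoint_left]
  intro x hxm hxn
  apply hmn
  have hd : ∀ i ∈ Finset.range L, dig b m i * b ^ i = dig b n i * b ^ i := by
    intro i hi
    have hi' := Finset.mem_range.mp hi
    have := (hxm i hi').symm.trans (hxn i hi')
    have : dig b m i = dig b n i := congrArg Fin.val this
    rw [this]
  calc m = m % b ^ L := (Nat.mod_eq_of_lt hm).symm
    _ = ∑ i ∈ Finset.range L, dig b m i * b ^ i := (sum_dig hb m L).symm
    _ = ∑ i ∈ Finset.range L, dig b n i * b ^ i := Finset.sum_congr rfl hd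
    _ = n % b ^ L := sum_dig hb n L
    _ = n := Nat.mod_eq_of_lt hn

lemma P_univ_eq {b : ℕ} (hb : 2 ≤ b) (P : Measure (ℕ → Fin b))
    (hP : ∀ (k : ℕ) (a : ℕ → Fin b),
      P {x | ∀ i < k, x i = a i} = (1 / (b : ENNReal)) ^ k) :
    P Set.univ = 1 := by
  have := hP 0 (ext b hb 0)
  simpa using this

lemma count_le {b : ℕ} (hb : 2 ≤ b) (P : Measure (ℕ → Fin b))
    (hP : ∀ (k : ℕ) (a : ℕ → Fin b),
      P {x | ∀ i < k, x i = a i} = (1 / (b : ENNReal)) ^ k)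
    {L N : ℕ} (hNL : N ≤ b ^ L) (S : Finset ℕ) (hS : ∀ n ∈ S, n < N)
    (E : Set (ℕ → Fin b))
    (hE : ∀ n ∈ S, {x : ℕ → Fin b | ∀ i < L, x i = ext b hb n i} ⊆ E) :
    (S.card : ENNReal) * (1 / (b : ENNReal)) ^ L ≤ P E := by
  have hdisj : (↑S : Set ℕ).PairwiseDisjoint
      (fun n => {x : ℕ → Fin b | ∀ i < L, x i = ext b hb n i}) := by
    intro m hm n hn hmn
    exact cyl_disjoint hb (lt_of_lt_of_le (hS m hm) hNL)
      (lt_of_lt_of_le (hS n hn) hNL) hmn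
  have hsum := measure_biUnion_finset (μ := P) hdisj
    (fun n _ => cyl_measurable (ext b hb n) L)
  calc (S.card : ENNReal) * (1 / (b : ENNReal)) ^ L
      = ∑ n ∈ S, P {x : ℕ → Fin b | ∀ i < L, x i = ext b hb n i} := by
        rw [Finset.sum_congr rfl fun n _ => hP L (ext b hb n), Finset.sum_const,
          nsmul_eq_mul]
    _ = P (⋃ n ∈ S, {x : ℕ → Fin b | ∀ i < L, x i = ext b hb n i}) := hsum.symm
    _ ≤ P E := measure_mono (Set.iUnion₂_subset hE)

/-- **Lemma.** Let `r ≥ 1`. For every `N ≥ 1`, every `k ∈ ℕ` and all `d, d' ∈ ℤ`,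
`(1/N)·|{n < N : Δ^(r)(n) = d ∧ Δ_k^(r)(n) = d'}| ≤ r·b·ℙ({x : Δ^(r)(x) = d ∧ Δ_k^(r)(x) = d'})`;
in particular `(1/N)·|{n < N : Δ^(r)(n) = d}| ≤ r·b·ℙ({x : Δ^(r)(x) = d})`. -/
theorem density_measure_bound (b : ℕ) (hb : 2 ≤ b)
    (P : Measure (ℕ → Fin b))
    (hP : ∀ (k : ℕ) (a : ℕ → Fin b),
      P {x | ∀ i < k, x i = a i} = (1 / (b : ENNReal)) ^ k)
    (r : ℕ) (hr : 1 ≤ r) (N : ℕ) (hN : 1 ≤ N) (k : ℕ) (d d' : ℤ) :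
    (((Finset.range N).filter fun n => delta b r n = d ∧ deltakNat b r k n = d').card : ℝ) / N ≤
        (r : ℝ) * b * (P {x | deltaX b r x = d ∧ deltak b r k x = d'}).toReal ∧
    (((Finset.range N).filter fun n => delta b r n = d).card : ℝ) / N ≤
        (r : ℝ) * b * (P {x | deltaX b r x = d}).toReal := by
  set L := Nat.log b (N + r - 1) + 1 with hLdef
  have hb1 : 1 < b := hb
  have hNr : N + r ≤ b ^ L := by
    have h := Nat.lt_pow_succ_log_self hb1 (N + r - 1)
    simp only [Nat.succ_eq_add_one] at h
    rw [hLdef]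
    omega
  have hbL : b ^ L ≤ b * (r * N) := by
    have h1 : b ^ Nat.log b (N + r - 1) ≤ N + r - 1 :=
      Nat.pow_log_le_self b (by omega)
    have h2 : N + r - 1 ≤ r * N := by
      obtain ⟨r', rfl⟩ : ∃ r', r = r' + 1 := ⟨r - 1, by omega⟩
      have h3 : r' ≤ r' * N := Nat.le_mul_of_pos_right r' (by omega)
      have h4 : (r' + 1) * N = r' * N + N := by ring
      omega
    calc b ^ L = b * b ^ Nat.log b (N + r - 1) := by rw [hLdef, pow_succ]; ring
      _ ≤ b * (r * N) := Nat.mul_le_mul_left b (h1.trans h2)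
  have hPfin : ∀ E : Set (ℕ → Fin b), P E ≠ ⊤ := by
    intro E
    have h1 : P E ≤ 1 := by
      rw [← P_univ_eq hb P hP]; exact measure_mono (Set.subset_univ E)
    exact ne_top_of_le_ne_top ENNReal.one_ne_top h1
  have key : ∀ (E : Set (ℕ → Fin b)) (S : Finset ℕ), (∀ n ∈ S, n < N) →
      (∀ n ∈ S, {x : ℕ → Fin b | ∀ i < L, x i = ext b hb n i} ⊆ E) →
      (S.card : ℝ) / N ≤ (r : ℝ) * b * (P E).toReal := by
    intro E S hSN hSE
    have hle := count_le hb P hP (le_trans (Nat.le_add_right N r) hNr) S hSN E hSE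
    have hb0 : (b : ENNReal) ≠ 0 := by
      simp only [ne_eq, Nat.cast_eq_zero]; omega
    have hbt : (b : ENNReal) ≠ ⊤ := ENNReal.natCast_ne_top b
    have hone : (1 / (b : ENNReal)) ^ L * (b : ENNReal) ^ L = 1 := by
      rw [← mul_pow, one_div, ENNReal.inv_mul_cancel hb0 hbt, one_pow]
    have hcard : (S.card : ENNReal) ≤ (b : ENNReal) ^ L * P E := by
      have h := mul_le_mul_right hle ((b : ENNReal) ^ L)
      have e : (b : ENNReal) ^ L * ((S.card : ENNReal) * (1 / (b : ENNReal)) ^ L)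
          = (S.card : ENNReal) * ((1 / (b : ENNReal)) ^ L * (b : ENNReal) ^ L) := by
        ring
      rw [e, hone, mul_one] at h
      exact h
    have hfin : (b : ENNReal) ^ L * P E ≠ ⊤ :=
      ENNReal.mul_ne_top (by simpa using (ENNReal.pow_ne_top hbt)) (hPfin E)
    have hcardR : (S.card : ℝ) ≤ (b : ℝ) ^ L * (P E).toReal := by
      have h := ENNReal.toReal_mono hfin hcard
      simpa [ENNReal.toReal_mul, ENNReal.toReal_pow] using h
    have hN0 : (0 : ℝ) < N := by exact_mod_cast hN
    rw [div_le_iff₀ hN0]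
    have hT : 0 ≤ (P E).toReal := ENNReal.toReal_nonneg
    have h6 : (b : ℝ) ^ L ≤ (b : ℝ) * ((r : ℝ) * N) := by exact_mod_cast hbL
    nlinarith [mul_le_mul_of_nonneg_right h6 hT]
  constructor
  · apply key _ _ (fun n hn => Finset.mem_range.mp (Finset.mem_filter.mp hn).1)
    intro n hn x hx
    obtain ⟨hnN, hd, hd'⟩ : n < N ∧ delta b r n = d ∧ deltakNat b r k n = d' := by
      have h := Finset.mem_filter.mp hn
      exact ⟨Finset.mem_range.mp h.1, h.2.1, h.2.2⟩
    have hnr : n + r < b ^ L := by omega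
    have hx' : ∀ i < L, ((x i : ℕ)) = dig b n i := fun i hi =>
      congrArg Fin.val (hx i hi)
    exact ⟨(deltaX_cyl hb x hnr hx').trans hd, (deltak_cyl hb x hnr hx').trans hd'⟩
  · apply key _ _ (fun n hn => Finset.mem_range.mp (Finset.mem_filter.mp hn).1)
    intro n hn x hx
    obtain ⟨hnN, hd⟩ : n < N ∧ delta b r n = d := by
      have h := Finset.mem_filter.mp hn
      exact ⟨Finset.mem_range.mp h.1, h.2⟩
    have hnr : n + r < b ^ L := by omega
    have hx' : ∀ i < L, ((x i : ℕ)) = dig b n i := fun i hi =>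
      congrArg Fin.val (hx i hi)
    exact (deltaX_cyl hb x hnr hx').trans hd
end
end

section
/- For every r̃ ∈ ℕ, every r₀ ∈ {0,…,b−1} and every d ∈ ℤ, μ^(b·r̃+r₀)(d) = ((b−r₀)/b)·μ^(r̃)(d−r₀) + (r₀/b)·μ^(r̃+1)(d+b−r₀). -/
open Filter Topology MeasureTheory

noncomputable section

lemma digitSum_mul_add (b : ℕ) (hb : 2 ≤ b) (m j : ℕ) (hj : j < b) :
    digitSum b (b * m + j) = digitSum b m + j := by
  rcases Nat.eq_zero_or_pos (b * m + j) with h | h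
  · have hj0 : j = 0 := by omega
    have hm0 : m = 0 := by
      rcases Nat.mul_eq_zero.mp (by omega : b * m = 0) with h' | h' <;> omega
    simp [hj0, hm0, digitSum]
  · rw [digitSum, Nat.digits_def' (by omega : 1 < b) h, List.sum_cons]
    have h1 : (b * m + j) % b = j := by
      rw [Nat.mul_add_mod, Nat.mod_eq_of_lt hj]
    have h2 : (b * m + j) / b = m := by
      rw [Nat.mul_add_div (by omega), Nat.div_eq_of_lt hj]; omega
    rw [h1, h2, digitSum]; omega

lemma delta_lo (b : ℕ) (hb : 2 ≤ b) (rt r0 m j : ℕ) (hj : j < b) (hlo : j + r0 < b) :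
    delta b (b * rt + r0) (b * m + j) = delta b rt m + r0 := by
  have h1 : b * m + j + (b * rt + r0) = b * (m + rt) + (j + r0) := by ring
  unfold delta
  rw [h1, digitSum_mul_add b hb (m + rt) (j + r0) hlo, digitSum_mul_add b hb m j hj]
  push_cast; ring

lemma delta_hi (b : ℕ) (hb : 2 ≤ b) (rt r0 m j : ℕ) (hj : j < b) (hr0 : r0 < b)
    (hhi : b ≤ j + r0) :
    delta b (b * rt + r0) (b * m + j) = delta b (rt + 1) m + r0 - b := by
  have key : b * (m + (rt + 1)) = b * m + b * rt + b := by ring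
  have h1 : b * m + j + (b * rt + r0) = b * (m + (rt + 1)) + (j + r0 - b) := by omega
  unfold delta
  rw [h1, digitSum_mul_add b hb (m + (rt + 1)) (j + r0 - b) (by omega),
    digitSum_mul_add b hb m j hj]
  have : ((j + r0 - b : ℕ) : ℤ) = (j : ℤ) + r0 - b := by omega
  push_cast [this]; ring

lemma sum_range_add' (f : ℕ → ℕ) (n k : ℕ) :
    ∑ i ∈ Finset.range (n + k), f i
      = ∑ i ∈ Finset.range n, f i + ∑ j ∈ Finset.range k, f (n + j) := by
  induction k with
  | zero => simp
  | succ k ih => rw [← Nat.add_assoc, Finset.sum_range_succ, ih, Finset.sum_range_succ]; ring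

lemma count_eq (b : ℕ) (hb : 2 ≤ b) (rt r0 : ℕ) (hr0 : r0 < b) (d : ℤ) (M : ℕ) :
    ((Finset.range (b * M)).filter fun n => delta b (b * rt + r0) n = d).card
      = (b - r0) * ((Finset.range M).filter fun m => delta b rt m = d - r0).card
        + r0 * ((Finset.range M).filter fun m => delta b (rt + 1) m = d + b - r0).card := by
  induction M with
  | zero => simp
  | succ M ih =>
    have hbM : b * (M + 1) = b * M + b := by ring
    have hL : ((Finset.range (b * M + b)).filter fun n => delta b (b * rt + r0) n = d).card
        = ((Finset.range (b * M)).filter fun n => delta b (b * rt + r0) n = d).card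
          + ∑ j ∈ Finset.range b, if delta b (b * rt + r0) (b * M + j) = d then 1 else 0 := by
      rw [Finset.card_filter, Finset.card_filter, sum_range_add']
    have hA : ((Finset.range (M + 1)).filter fun m => delta b rt m = d - r0).card
        = ((Finset.range M).filter fun m => delta b rt m = d - r0).card
          + (if delta b rt M = d - (r0 : ℤ) then 1 else 0) := by
      rw [Finset.card_filter, Finset.card_filter, Finset.sum_range_succ]
    have hB : ((Finset.range (M + 1)).filter fun m => delta b (rt + 1) m = d + b - r0).card
        = ((Finset.range M).filter fun m => delta b (rt + 1) m = d + b - r0).card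
          + (if delta b (rt + 1) M = d + (b : ℤ) - (r0 : ℤ) then 1 else 0) := by
      rw [Finset.card_filter, Finset.card_filter, Finset.sum_range_succ]
    have hblock : (∑ j ∈ Finset.range b, if delta b (b * rt + r0) (b * M + j) = d then 1 else 0)
        = (b - r0) * (if delta b rt M = d - (r0 : ℤ) then 1 else 0)
          + r0 * (if delta b (rt + 1) M = d + (b : ℤ) - (r0 : ℤ) then 1 else 0) := by
      have hsplit : (∑ j ∈ Finset.range b, if delta b (b * rt + r0) (b * M + j) = d then 1 else 0)
          = (∑ j ∈ Finset.range (b - r0),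
              if delta b (b * rt + r0) (b * M + j) = d then 1 else 0)
            + ∑ i ∈ Finset.range r0,
              if delta b (b * rt + r0) (b * M + ((b - r0) + i)) = d then 1 else 0 := by
        have hb' : b - r0 + r0 = b := by omega
        rw [← sum_range_add', hb']
      rw [hsplit]
      congr 1
      · calc (∑ j ∈ Finset.range (b - r0),
              if delta b (b * rt + r0) (b * M + j) = d then 1 else 0)
            = ∑ _j ∈ Finset.range (b - r0),
              (if delta b rt M = d - (r0 : ℤ) then 1 else 0) := by
              apply Finset.sum_congr rfl
              intro j hj
              have hj' := Finset.mem_range.mp hj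
              rw [delta_lo b hb rt r0 M j (by omega) (by omega)]
              exact if_congr (by omega) rfl rfl
          _ = (b - r0) * (if delta b rt M = d - (r0 : ℤ) then 1 else 0) := by
              rw [Finset.sum_const, Finset.card_range, smul_eq_mul]
      · calc (∑ i ∈ Finset.range r0,
              if delta b (b * rt + r0) (b * M + ((b - r0) + i)) = d then 1 else 0)
            = ∑ _i ∈ Finset.range r0,
              (if delta b (rt + 1) M = d + (b : ℤ) - (r0 : ℤ) then 1 else 0) := by
              apply Finset.sum_congr rfl
              intro i hi
              have hi' := Finset.mem_range.mp hi
              rw [delta_hi b hb rt r0 M ((b - r0) + i) (by omega) hr0 (by omega)]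
              exact if_congr (by omega) rfl rfl
          _ = r0 * (if delta b (rt + 1) M = d + (b : ℤ) - (r0 : ℤ) then 1 else 0) := by
              rw [Finset.sum_const, Finset.card_range, smul_eq_mul]
    rw [hbM, hL, ih, hA, hB, hblock]
    ring

/-- **Proposition (inductive relation on the measures).** For every `r̃ ∈ ℕ`, every digit
`r₀ ∈ {0,…,b-1}` and every `d ∈ ℤ`,
`μ^(b·r̃+r₀)(d) = ((b-r₀)/b)·μ^(r̃)(d-r₀) + (r₀/b)·μ^(r̃+1)(d+b-r₀)`. -/
theorem measure_recurrence (b : ℕ) (hb : 2 ≤ b)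
    (μ : ℕ → ℤ → ℝ)
    (hμ : ∀ (r : ℕ) (d : ℤ),
      Tendsto (fun N : ℕ =>
        (((Finset.range N).filter fun n => delta b r n = d).card : ℝ) / N)
        atTop (𝓝 (μ r d)))
    (rt : ℕ) (r0 : ℕ) (hr0 : r0 < b) (d : ℤ) :
    μ (b * rt + r0) d =
      (((b : ℝ) - r0) / b) * μ rt (d - (r0 : ℤ)) +
        ((r0 : ℝ) / b) * μ (rt + 1) (d + (b : ℤ) - (r0 : ℤ)) := by
  have hbM : Tendsto (fun M : ℕ => b * M) atTop atTop :=
    tendsto_atTop_mono (fun M => Nat.le_mul_of_pos_left M (by omega)) tendsto_id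
  have h1 : Tendsto (fun M : ℕ =>
      (((Finset.range (b * M)).filter fun n => delta b (b * rt + r0) n = d).card : ℝ)
        / ((b * M : ℕ) : ℝ)) atTop (𝓝 (μ (b * rt + r0) d)) :=
    (hμ (b * rt + r0) d).comp hbM
  have h2 : Tendsto (fun M : ℕ =>
      (((b : ℝ) - r0) / b) *
          ((((Finset.range M).filter fun m => delta b rt m = d - (r0 : ℤ)).card : ℝ) / M)
        + ((r0 : ℝ) / b) *
          ((((Finset.range M).filter fun m =>
              delta b (rt + 1) m = d + (b : ℤ) - (r0 : ℤ)).card : ℝ) / M))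
      atTop (𝓝 ((((b : ℝ) - r0) / b) * μ rt (d - (r0 : ℤ)) +
        ((r0 : ℝ) / b) * μ (rt + 1) (d + (b : ℤ) - (r0 : ℤ)))) :=
    (((hμ rt (d - (r0 : ℤ))).const_mul _).add
      ((hμ (rt + 1) (d + (b : ℤ) - (r0 : ℤ))).const_mul _))
  have heq : (fun M : ℕ =>
      (((b : ℝ) - r0) / b) *
          ((((Finset.range M).filter fun m => delta b rt m = d - (r0 : ℤ)).card : ℝ) / M)
        + ((r0 : ℝ) / b) *
          ((((Finset.range M).filter fun m =>
              delta b (rt + 1) m = d + (b : ℤ) - (r0 : ℤ)).card : ℝ) / M)) =ᶠ[atTop]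
      (fun M : ℕ =>
      (((Finset.range (b * M)).filter fun n => delta b (b * rt + r0) n = d).card : ℝ)
        / ((b * M : ℕ) : ℝ)) := by
    filter_upwards [eventually_gt_atTop 0] with M hM
    rw [count_eq b hb rt r0 hr0 d M]
    have hM' : (M : ℝ) ≠ 0 := Nat.cast_ne_zero.mpr (by omega)
    have hb' : (b : ℝ) ≠ 0 := Nat.cast_ne_zero.mpr (by omega)
    push_cast [Nat.cast_sub hr0.le]
    field_simp
  exact tendsto_nhds_unique h1 (h2.congr' heq)
end
end

section
/- For every d ∈ ℤ: if d = 1 − k·(b−1) for some k ∈ ℕ then μ^(1)(d) = 1/b^k − 1/b^{k+1} = (b−1)/b^{k+1}, and otherwise μ^(1)(d) = 0. -/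
open Filter Topology MeasureTheory

noncomputable section

lemma digitSum_pos (b : ℕ) (hb : 2 ≤ b) (n : ℕ) (hn : 0 < n) :
    digitSum b n = n % b + digitSum b (n / b) := by
  unfold digitSum
  rw [Nat.digits_def' hb hn]
  simp

lemma digitSum_succ_aux (b : ℕ) (hb : 2 ≤ b) :
    ∀ n : ℕ, digitSum b (n + 1) + (b - 1) * b.maxPowDiv (n + 1) = digitSum b n + 1 := by
  have hb1 : 1 < b := hb
  intro n
  induction n using Nat.strong_induction_on with
  | _ n IH =>
    by_cases hdvd : b ∣ n + 1
    · obtain ⟨m, hm⟩ := hdvd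
      have hm0 : 0 < m := by
        rcases Nat.eq_zero_or_pos m with h | h
        · simp [h] at hm
        · exact h
      have hn0 : 0 < n := by nlinarith
      have hmax : b.maxPowDiv (n + 1) = b.maxPowDiv m + 1 := by
        rw [hm]; exact Nat.maxPowDiv.base_mul_eq_succ hb1 (by omega : m ≠ 0)
      obtain ⟨m', rfl⟩ : ∃ m', m = m' + 1 := ⟨m - 1, by omega⟩
      have hn : n = b * m' + (b - 1) := by
        have : b * (m' + 1) = b * m' + b := by ring
        omega
      have hmod : (n + 1) % b = 0 := by rw [hm]; exact Nat.mul_mod_right b _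
      have hdiv : (n + 1) / b = m' + 1 := by
        rw [hm]; exact Nat.mul_div_cancel_left _ (by omega)
      have hnmod : n % b = b - 1 := by
        rw [hn, Nat.mul_add_mod]; exact Nat.mod_eq_of_lt (by omega)
      have hndiv : n / b = m' := by
        rw [hn, Nat.mul_add_div (by omega), Nat.div_eq_of_lt (by omega)]; omega
      have hmb : m' + 1 = m' + 1 := rfl
      have h1 : digitSum b (n + 1) = digitSum b (m' + 1) := by
        rw [digitSum_pos b hb (n + 1) (by omega), hmod, hdiv]; omega
      have h2 : digitSum b n = (b - 1) + digitSum b m' := by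
        rw [digitSum_pos b hb n hn0, hnmod, hndiv]
      have hlt : m' < n := hndiv ▸ Nat.div_lt_self hn0 hb1
      have hIH := IH m' hlt
      rw [h1, h2, hmax, Nat.mul_add, Nat.mul_one]
      omega
    · have hmax : b.maxPowDiv (n + 1) = 0 := by
        by_contra h
        apply hdvd
        have h1 : 1 ≤ b.maxPowDiv (n + 1) := Nat.pos_of_ne_zero h
        calc b = b ^ 1 := (pow_one b).symm
          _ ∣ b ^ (b.maxPowDiv (n + 1)) := pow_dvd_pow b h1
          _ ∣ n + 1 := (Nat.maxPowDiv.pow_dvd (p := b) (n := n + 1))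
      rcases Nat.eq_zero_or_pos n with hn0 | hn0
      · subst hn0
        have h1 : digitSum b 1 = 1 := by
          rw [digitSum_pos b hb 1 one_pos]
          simp [Nat.mod_eq_of_lt hb1, Nat.div_eq_of_lt hb1, digitSum]
        have h0 : digitSum b 0 = 0 := by simp [digitSum]
        simp only [Nat.zero_add, hmax, Nat.mul_zero, h1, h0]
      · have hdiv : (n + 1) / b = n / b := by rw [Nat.succ_div, if_neg hdvd]; omega
        have e1 := Nat.div_add_mod (n + 1) b
        have e2 := Nat.div_add_mod n b
        have l1 : (n + 1) % b < b := Nat.mod_lt _ (by omega)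
        have l2 : n % b < b := Nat.mod_lt _ (by omega)
        rw [hdiv] at e1
        have hmodeq : (n + 1) % b = n % b + 1 := by omega
        rw [digitSum_pos b hb (n + 1) (by omega), digitSum_pos b hb n hn0, hdiv, hmodeq, hmax]
        omega

lemma delta_one (b : ℕ) (hb : 2 ≤ b) (n : ℕ) :
    delta b 1 n = 1 - (b.maxPowDiv (n + 1) : ℤ) * ((b : ℤ) - 1) := by
  have h := digitSum_succ_aux b hb n
  have hb1 : 1 ≤ b := by omega
  unfold delta
  have := congrArg (fun x : ℕ => (x : ℤ)) h
  push_cast [Nat.cast_sub hb1] at this ⊢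
  linarith

lemma maxPowDiv_eq_iff (b : ℕ) (hb : 2 ≤ b) (n k : ℕ) :
    b.maxPowDiv (n + 1) = k ↔ b ^ k ∣ n + 1 ∧ ¬ b ^ (k + 1) ∣ n + 1 := by
  constructor
  · rintro rfl
    refine ⟨(Nat.maxPowDiv.pow_dvd (p := b) (n := n + 1)), fun h => ?_⟩
    have : b.maxPowDiv (n + 1) + 1 ≤ b.maxPowDiv (n + 1) := (Nat.pow_dvd_iff_le_padicValNat (p := b) (n := n + 1) (by omega) (by omega)).mp h
    omega
  · rintro ⟨h1, h2⟩
    have hle : k ≤ b.maxPowDiv (n + 1) := (Nat.pow_dvd_iff_le_padicValNat (p := b) (n := n + 1) (by omega) (by omega)).mp h1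
    by_contra h
    have hlt : k + 1 ≤ b.maxPowDiv (n + 1) := by omega
    exact h2 ((pow_dvd_pow b hlt).trans ((Nat.maxPowDiv.pow_dvd (p := b) (n := n + 1))))

lemma card_count (b : ℕ) (hb : 2 ≤ b) (k N : ℕ) :
    ((Finset.range N).filter fun n => b.maxPowDiv (n + 1) = k).card
      = N / b ^ k - N / b ^ (k + 1) := by
  have hsub : (Finset.range N).filter (fun n => b ^ (k+1) ∣ n + 1)
      ⊆ (Finset.range N).filter (fun n => b ^ k ∣ n + 1) := by
    intro n hn
    simp only [Finset.mem_filter] at hn ⊢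
    exact ⟨hn.1, (pow_dvd_pow b (Nat.le_succ k)).trans hn.2⟩
  have heq : (Finset.range N).filter (fun n => b.maxPowDiv (n + 1) = k)
      = (Finset.range N).filter (fun n => b ^ k ∣ n + 1)
        \ (Finset.range N).filter (fun n => b ^ (k+1) ∣ n + 1) := by
    ext n
    simp only [Finset.mem_sdiff, Finset.mem_filter, Finset.mem_range]
    rw [maxPowDiv_eq_iff b hb]
    tauto
  rw [heq, Finset.card_sdiff_of_subset hsub, Nat.card_multiples, Nat.card_multiples]

lemma tendsto_nat_div (m : ℕ) (hm : 0 < m) :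
    Tendsto (fun N : ℕ => ((N / m : ℕ) : ℝ) / N) atTop (𝓝 (1 / m)) := by
  have h1 : Tendsto (fun N : ℕ => ((m : ℝ)) / N) atTop (𝓝 0) :=
    tendsto_const_div_atTop_nhds_zero_nat (m : ℝ)
  have h2 : Tendsto (fun N : ℕ => (N % m : ℕ) / (N : ℝ)) atTop (𝓝 0) := by
    apply squeeze_zero (fun N => by positivity) (fun N => ?_) h1
    rcases Nat.eq_zero_or_pos N with h | h
    · simp [h]
    · apply div_le_div_of_nonneg_right _ (by positivity)
      exact_mod_cast (Nat.mod_lt N hm).le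
  have h3 : Tendsto (fun N : ℕ => (1 - (N % m : ℕ) / (N : ℝ)) / m) atTop (𝓝 ((1 - 0) / m)) :=
    ((tendsto_const_nhds.sub h2).div_const m)
  rw [sub_zero] at h3
  apply h3.congr'
  filter_upwards [eventually_gt_atTop 0] with N hN
  have hN0 : (N : ℝ) ≠ 0 := by positivity
  have hm0 : (m : ℝ) ≠ 0 := by positivity
  have key : ((N / m : ℕ) : ℝ) * m = (N : ℝ) - ((N % m : ℕ) : ℝ) := by
    have hnat : N % m + N / m * m = N := Nat.mod_add_div' N m
    have hcast : ((N % m : ℕ) : ℝ) + ((N / m : ℕ) : ℝ) * m = N := by exact_mod_cast hnat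
    linarith
  rw [div_eq_div_iff hm0 hN0, sub_mul, one_mul, div_mul_cancel₀ _ hN0, key]

/-- **Lemma (the measure `μ^(1)`).** For every `d ∈ ℤ`: if `d = 1 - k(b-1)` for some `k ∈ ℕ`
then `μ^(1)(d) = 1/b^k - 1/b^(k+1) = (b-1)/b^(k+1)`, and otherwise `μ^(1)(d) = 0`. -/
theorem mu_one (b : ℕ) (hb : 2 ≤ b)
    (μ : ℕ → ℤ → ℝ)
    (hμ : ∀ (r : ℕ) (d : ℤ),
      Tendsto (fun N : ℕ =>
        (((Finset.range N).filter fun n => delta b r n = d).card : ℝ) / N)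
        atTop (𝓝 (μ r d)))
    (d : ℤ) :
    (∀ k : ℕ, d = 1 - (k : ℤ) * ((b : ℤ) - 1) →
      μ 1 d = 1 / (b : ℝ) ^ k - 1 / (b : ℝ) ^ (k + 1) ∧
      μ 1 d = ((b : ℝ) - 1) / (b : ℝ) ^ (k + 1)) ∧
    ((¬ ∃ k : ℕ, d = 1 - (k : ℤ) * ((b : ℤ) - 1)) → μ 1 d = 0) := by
  have hbR : (0 : ℝ) < b := by positivity
  have hbne : (b : ℝ) ≠ 0 := ne_of_gt hbR
  constructor
  · intro k hd
    have hfilter : ∀ n : ℕ, (delta b 1 n = d) ↔ b.maxPowDiv (n + 1) = k := by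
      intro n
      rw [delta_one b hb n, hd]
      constructor
      · intro h
        have hbz : (b : ℤ) - 1 ≠ 0 := by
          have : (2 : ℤ) ≤ b := by exact_mod_cast hb
          omega
        have h' : (b.maxPowDiv (n + 1) : ℤ) * ((b : ℤ) - 1) = k * ((b : ℤ) - 1) := by
          linarith
        have := mul_right_cancel₀ hbz h'
        exact_mod_cast this
      · intro h; rw [h]
    have hcard : ∀ N : ℕ,
        ((Finset.range N).filter fun n => delta b 1 n = d).card
          = N / b ^ k - N / b ^ (k + 1) := by
      intro N
      rw [← card_count b hb k N]
      congr 1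
      ext n
      simp [hfilter n]
    have hmono : ∀ N : ℕ, N / b ^ (k + 1) ≤ N / b ^ k :=
      fun N => Nat.div_le_div_left (pow_le_pow_right₀ (by omega) (Nat.le_succ k)) (by positivity)
    have hlim : Tendsto (fun N : ℕ =>
        (((Finset.range N).filter fun n => delta b 1 n = d).card : ℝ) / N)
        atTop (𝓝 (1 / (b : ℝ) ^ k - 1 / (b : ℝ) ^ (k + 1))) := by
      have t1 := tendsto_nat_div (b ^ k) (by positivity)
      have t2 := tendsto_nat_div (b ^ (k + 1)) (by positivity)
      have := t1.sub t2
      have hcast1 : (1 : ℝ) / (b ^ k : ℕ) = 1 / (b : ℝ) ^ k := by push_cast; ring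
      have hcast2 : (1 : ℝ) / (b ^ (k+1) : ℕ) = 1 / (b : ℝ) ^ (k+1) := by push_cast; ring
      rw [hcast1, hcast2] at this
      apply this.congr
      intro N
      rw [hcard N]
      rw [Nat.cast_sub (hmono N)]
      ring
    have huniq := tendsto_nhds_unique (hμ 1 d) hlim
    refine ⟨huniq, huniq.trans ?_⟩
    field_simp
    ring
  · intro hnot
    have hempty : ∀ n : ℕ, delta b 1 n ≠ d := by
      intro n h
      exact hnot ⟨b.maxPowDiv (n + 1), by rw [← h, delta_one b hb n]⟩
    have : Tendsto (fun N : ℕ =>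
        (((Finset.range N).filter fun n => delta b 1 n = d).card : ℝ) / N)
        atTop (𝓝 0) := by
      have : ∀ N : ℕ, ((Finset.range N).filter fun n => delta b 1 n = d) = ∅ := by
        intro N
        apply Finset.filter_false_of_mem
        intro n _
        exact hempty n
      simp only [this, Finset.card_empty, Nat.cast_zero, zero_div]
      exact tendsto_const_nhds
    exact tendsto_nhds_unique (hμ 1 d) this
end
end
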